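/- Assume n ≥ 1 and define Q(A,a) := ¼ Σ_{j,k=1}^n ⟨ω(e_k,e_j), a⟩² − ½ Σ_{k=1}^n ‖ω(A,e_k)‖²_𝐂 for (A,a) ∈ H₀ × 𝐂. Then the largest constant k ∈ ℝ such that Q(A,a) ≥ k (‖A‖² + ‖a‖²) for all (A,a) ∈ H₀ × 𝐂 is k = −½ max{ Σ_{k=1}^n ‖ω(A,e_k)‖²_𝐂 : A ∈ H₀, ‖A‖ = 1 }. -/

import Mathlib

open scoped RealInnerProductSpace

/-- The Ricci quadratic form
`Q(A,a) = ¼ Σ_{j,k} ⟨ω(e_k,e_j), a⟩² − ½ Σ_k ‖ω(A,e_k)‖²_𝐂` on `H₀ × 𝐂`. -/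
noncomputable def ricciQ {H C : Type*} [NormedAddCommGroup H] [InnerProductSpace ℝ H]
    [NormedAddCommGroup C] [InnerProductSpace ℝ C]
    (n : ℕ) (e : OrthonormalBasis (Fin n) ℝ H)
    (ω : H →ₗ[ℝ] H →ₗ[ℝ] C) (A : H) (a : C) : ℝ :=
  (1/4) * (∑ j : Fin n, ∑ k : Fin n, ⟪ω (e k) (e j), a⟫ ^ 2) -
    (1/2) * (∑ k : Fin n, ‖ω A (e k)‖ ^ 2)

/-- If `n ≥ 1`, the largest constant `k ∈ ℝ` with `Q(A,a) ≥ k (‖A‖² + ‖a‖²)` for all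
`(A,a) ∈ H₀ × 𝐂` is `k = −½ max{Σ_k ‖ω(A,e_k)‖²_𝐂 : ‖A‖ = 1}`. -/
theorem ricci_optimal_lower_bound
    {H C : Type*} [NormedAddCommGroup H] [InnerProductSpace ℝ H]
    [NormedAddCommGroup C] [InnerProductSpace ℝ C] [FiniteDimensional ℝ C]
    (n : ℕ) (hn : 0 < n) (e : OrthonormalBasis (Fin n) ℝ H)
    (ω : H →ₗ[ℝ] H →ₗ[ℝ] C)
    (hskew : ∀ A B : H, ω A B = - ω B A) :
    IsGreatest
      {k : ℝ | ∀ (A : H) (a : C), k * (‖A‖ ^ 2 + ‖a‖ ^ 2) ≤ ricciQ n e ω A a}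
      (-(1/2) * sSup {t : ℝ | ∃ A : H, ‖A‖ = 1 ∧ t = ∑ k : Fin n, ‖ω A (e k)‖ ^ 2}) := by
  have hfin : FiniteDimensional ℝ H := Module.Finite.of_basis e.toBasis
  set f : H → ℝ := fun A => ∑ k : Fin n, ‖ω A (e k)‖ ^ 2 with hf
  set S : Set ℝ := {t : ℝ | ∃ A : H, ‖A‖ = 1 ∧ t = ∑ k : Fin n, ‖ω A (e k)‖ ^ 2} with hSdef
  have hfc : Continuous f := by
    apply continuous_finset_sum
    intro k _
    exact ((ω.flip (e k)).continuous_of_finiteDimensional.norm).pow 2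
  have hSimg : S = f '' Metric.sphere (0 : H) 1 := by
    ext t
    constructor
    · rintro ⟨A, hA, rfl⟩
      exact ⟨A, by simpa [mem_sphere_zero_iff_norm] using hA, rfl⟩
    · rintro ⟨A, hA, rfl⟩
      exact ⟨A, by simpa [mem_sphere_zero_iff_norm] using hA, rfl⟩
  have hScompact : IsCompact S := by
    rw [hSimg]
    exact (isCompact_sphere (0 : H) 1).image hfc
  have hne : S.Nonempty := ⟨f (e ⟨0, hn⟩), e ⟨0, hn⟩, e.orthonormal.1 _, rfl⟩
  have hbdd : BddAbove S := hScompact.bddAbove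
  set M : ℝ := sSup S with hM
  obtain ⟨A₀, hA₀norm, hA₀⟩ : ∃ A : H, ‖A‖ = 1 ∧ M = f A := hScompact.sSup_mem hne
  have hfnn : ∀ A : H, 0 ≤ f A := fun A =>
    Finset.sum_nonneg fun k _ => sq_nonneg _
  have hMnn : 0 ≤ M := hA₀ ▸ hfnn A₀
  have hbound : ∀ A : H, f A ≤ M * ‖A‖ ^ 2 := by
    intro A
    rcases eq_or_ne A 0 with rfl | hA
    · simp [hf]
    · have hnA : (0 : ℝ) < ‖A‖ := norm_pos_iff.2 hA
      have hu : ‖(‖A‖⁻¹ • A)‖ = 1 := by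
        rw [norm_smul]
        simp [abs_of_pos (inv_pos.2 hnA), inv_mul_cancel₀ hnA.ne']
      have hmem : f (‖A‖⁻¹ • A) ∈ S := ⟨_, hu, rfl⟩
      have hle : f (‖A‖⁻¹ • A) ≤ M := le_csSup hbdd hmem
      have hscale : f (‖A‖⁻¹ • A) = ‖A‖⁻¹ ^ 2 * f A := by
        simp only [hf, Finset.mul_sum]
        refine Finset.sum_congr rfl fun k _ => ?_
        rw [map_smul, LinearMap.smul_apply, norm_smul]
        simp [abs_of_pos (inv_pos.2 hnA), mul_pow]
      rw [hscale] at hle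
      have := mul_le_mul_of_nonneg_right hle (le_of_lt (pow_pos hnA 2))
      calc f A = ‖A‖⁻¹ ^ 2 * f A * ‖A‖ ^ 2 := by
              field_simp
        _ ≤ M * ‖A‖ ^ 2 := this
  constructor
  · intro A a
    have h1 : 0 ≤ ∑ j : Fin n, ∑ k : Fin n, ⟪ω (e k) (e j), a⟫ ^ 2 :=
      Finset.sum_nonneg fun j _ => Finset.sum_nonneg fun k _ => sq_nonneg _
    have h2 : f A ≤ M * ‖A‖ ^ 2 := hbound A
    have h3 : 0 ≤ ‖a‖ ^ 2 := sq_nonneg _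
    simp only [ricciQ]
    have : (∑ k : Fin n, ‖ω A (e k)‖ ^ 2) = f A := rfl
    rw [this]
    nlinarith [hMnn]
  · intro k hk
    have := hk A₀ 0
    simp only [ricciQ, norm_zero, inner_zero_right] at this
    have hfa : (∑ k : Fin n, ‖ω A₀ (e k)‖ ^ 2) = f A₀ := rfl
    rw [hA₀norm] at this
    simp only [hfa, ← hA₀, one_pow, ne_eq, OfNat.ofNat_ne_zero, not_false_eq_true,
      zero_pow, Finset.sum_const_zero, mul_zero, zero_sub, add_zero, mul_one] at this
    linarith
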